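/- Let (X_α)_{α<ω₁} be a tower of infinite subsets of ℕ with X := X_0 infinite and co-infinite. Let A = {ℕ \ X_α : α < ω₁}, and let B ⊆ 2^ω be an ℵ₁-dense family consisting of infinite subsets of ℕ each of which is almost disjoint from X. Suppose f : A → B is a function such that there are infinitely many n ∈ X with the property that for every Y ∈ A with n ∈ Y there exists m ∈ X with m ≥ n and m ∈ f(Y). Then the tower (X_α)_{α<ω₁} has a pseudointersection; indeed the set X_∞ = {n ∈ X : for every Y ∈ A with n ∈ Y there exists m ∈ X with m ≥ n and m ∈ f(Y)} is a pseudointersection. -/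
import Mathlib


/-- Lemma on towers whose statement is Lemma `little` of the paper.
A tower `(X_α)_{α<ω₁}` of infinite subsets of ℕ, with `X = X 0` infinite and
co-infinite; `A` is the set of (characteristic functions of) complements of the
tower elements; `B ⊆ 2^ω` is ℵ₁-dense, consisting of infinite sets almost
disjoint from `X`.  If `f : A → B` is such that for infinitely many `n ∈ X`,
every `Y ∈ A` with `n ∈ Y` admits `m ∈ X`, `m ≥ n`, with `m ∈ f Y`, then the
set `X_∞` of all such `n` is a pseudointersection of the tower. -/
theorem stmt0
    (X : Ordinal → Set ℕ)
    (htower_inf : ∀ α < (Cardinal.aleph 1).ord, (X α).Infinite)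
    (htower : ∀ α β : Ordinal, α < β → β < (Cardinal.aleph 1).ord → (X β \ X α).Finite)
    (hX0inf : (X 0).Infinite) (hX0coinf : (X 0)ᶜ.Infinite)
    (A : Set (ℕ → Bool))
    (hA : A = {y : ℕ → Bool | ∃ α < (Cardinal.aleph 1).ord, ∀ n : ℕ, y n = true ↔ n ∉ X α})
    (B : Set (ℕ → Bool))
    (hBdense : ∀ U : Set (ℕ → Bool), IsOpen U → U.Nonempty →
      Cardinal.mk ↥(B ∩ U) = Cardinal.aleph 1)
    (hBinf : ∀ Y ∈ B, {n : ℕ | Y n = true}.Infinite)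
    (hBad : ∀ Y ∈ B, ({n : ℕ | Y n = true} ∩ X 0).Finite)
    (f : (ℕ → Bool) → (ℕ → Bool))
    (hf : ∀ Y ∈ A, f Y ∈ B)
    (hinf : {n ∈ X 0 | ∀ Y ∈ A, Y n = true →
      ∃ m ∈ X 0, n ≤ m ∧ f Y m = true}.Infinite) :
    {n ∈ X 0 | ∀ Y ∈ A, Y n = true → ∃ m ∈ X 0, n ≤ m ∧ f Y m = true}.Infinite ∧
    ∀ α < (Cardinal.aleph 1).ord,
      ({n ∈ X 0 | ∀ Y ∈ A, Y n = true → ∃ m ∈ X 0, n ≤ m ∧ f Y m = true} \ X α).Finite := by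
  classical
  refine ⟨hinf, fun α hα => ?_⟩
  set Y : ℕ → Bool := fun n => decide (n ∉ X α) with hY
  have hYA : Y ∈ A := by
    rw [hA]
    exact ⟨α, hα, fun n => by simp [hY]⟩
  have hS : ({m : ℕ | f Y m = true} ∩ X 0).Finite := hBad _ (hf Y hYA)
  have hbdd : BddAbove ({m : ℕ | f Y m = true} ∩ X 0) := hS.bddAbove
  obtain ⟨N, hN⟩ := hbdd
  apply (Set.finite_Iic N).subset
  rintro n ⟨⟨hn0, hn⟩, hnα⟩
  obtain ⟨m, hm0, hnm, hfm⟩ := hn Y hYA (by simp [hY, hnα])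
  exact le_trans hnm (hN ⟨hfm, hm0⟩)
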